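/- (Large energy gives small partial image set) Let G act on X, A ⊆ G and Y ⊆ X finite nonempty, 0 < α ≤ 1. If E(A,Y) ≥ 2α|A|²|Y|, then there exists E ⊆ A × Y with |E| ≥ α|A||Y| and |A_E(Y)| ≤ α⁻²|Y|, where A_E(Y) = {a·y : (a,y) ∈ E}. -/

import Mathlib

open scoped Classical


theorem stmt16 {G X : Type*} [Group G] [MulAction G X]
    (A : Finset G) (Y : Finset X) (hA : A.Nonempty) (hY : Y.Nonempty)
    (α : ℝ) (hα0 : 0 < α) (hα1 : α ≤ 1)
    (hE : 2 * α * (A.card : ℝ) ^ 2 * Y.card ≤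
      ((((A ×ˢ A) ×ˢ (Y ×ˢ Y)).filter
          (fun q => q.1.1 • q.2.1 = q.1.2 • q.2.2)).card : ℝ)) :
    ∃ E ⊆ A ×ˢ Y, α * A.card * Y.card ≤ (E.card : ℝ) ∧
      ((E.image (fun p => p.1 • p.2)).card : ℝ) ≤ α⁻¹ ^ 2 * Y.card := by
  classical
  set f : G × X → X := fun p => p.1 • p.2 with hf
  set T : Finset (G × X) := A ×ˢ Y with hT
  set r : X → ℕ := fun x => (T.filter (fun p => f p = x)).card with hr
  set I : Finset X := T.image f with hI
  have hN : (0:ℝ) < A.card := by exact_mod_cast Finset.card_pos.2 hA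
  have hM : (0:ℝ) < Y.card := by exact_mod_cast Finset.card_pos.2 hY
  -- r x ≤ |A|
  have hrA : ∀ x, (r x : ℝ) ≤ (A.card : ℝ) := by
    intro x
    have : r x ≤ A.card := by
      apply Finset.card_le_card_of_injOn (fun p => p.1)
      · intro p hp
        replace hp : p ∈ T.filter (fun p => f p = x) := hp
        simp only [hr, hT, Finset.mem_filter, Finset.mem_product] at hp
        exact hp.1.1
      · intro p hp q hq hpq
        simp only [hr, hT, Finset.coe_filter, Set.mem_setOf_eq, Finset.mem_product,
          hf] at hp hq
        have h1 : p.1 • p.2 = x := hp.2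
        have h2 : q.1 • q.2 = x := hq.2
        have hpq' : p.1 = q.1 := hpq
        have : p.2 = q.2 := by
          have h3 := h1.trans h2.symm
          rw [hpq'] at h3
          exact smul_left_cancel _ h3
        exact Prod.ext hpq' this
    exact_mod_cast this
  -- energy = ∑ r²
  have hS : (((A ×ˢ A) ×ˢ (Y ×ˢ Y)).filter
          (fun q => q.1.1 • q.2.1 = q.1.2 • q.2.2)).card
      = ∑ x ∈ I, r x * r x := by
    rw [Finset.card_eq_sum_card_fiberwise (f := fun q => q.1.1 • q.2.1) (t := I)
      (by
        intro q hq
        replace hq : q ∈ ((A ×ˢ A) ×ˢ (Y ×ˢ Y)).filter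
          (fun q => q.1.1 • q.2.1 = q.1.2 • q.2.2) := hq
        simp only [Finset.mem_filter, Finset.mem_product] at hq
        exact Finset.mem_image.2 ⟨(q.1.1, q.2.1), by
          simp [hT, hq.1.1.1, hq.1.2.1], rfl⟩)]
    refine Finset.sum_congr rfl fun x hx => ?_
    have : ((T.filter fun p => f p = x) ×ˢ (T.filter fun p => f p = x)).card
        = r x * r x := by simp [hr]
    rw [← this]
    refine Finset.card_nbij' (fun q => ((q.1.1, q.2.1), (q.1.2, q.2.2)))
      (fun q => ((q.1.1, q.2.1), (q.1.2, q.2.2))) ?_ ?_ ?_ ?_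
    · intro q hq
      simp only [Finset.mem_coe, Finset.mem_filter, Finset.mem_product] at hq
      obtain ⟨⟨⟨⟨ha, hb⟩, hy, hz⟩, heq⟩, hx'⟩ := hq
      show ((q.1.1, q.2.1), q.1.2, q.2.2) ∈
        (T.filter fun p => f p = x) ×ˢ (T.filter fun p => f p = x)
      simp only [Finset.mem_product, Finset.mem_filter, hT, hf]
      exact ⟨⟨⟨ha, hy⟩, hx'⟩, ⟨hb, hz⟩, heq ▸ hx'⟩
    · intro p hp
      replace hp : p ∈ (T.filter fun p => f p = x) ×ˢ (T.filter fun p => f p = x) := hp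
      simp only [Finset.mem_product, Finset.mem_filter, hT, hf] at hp
      obtain ⟨⟨⟨ha, hy⟩, h1⟩, ⟨hb, hz⟩, h2⟩ := hp
      show ((p.1.1, p.2.1), p.1.2, p.2.2) ∈ (((A ×ˢ A) ×ˢ (Y ×ˢ Y)).filter
        (fun q => q.1.1 • q.2.1 = q.1.2 • q.2.2)).filter (fun a => a.1.1 • a.2.1 = x)
      simp only [Finset.mem_filter, Finset.mem_product]
      exact ⟨⟨⟨⟨ha, hb⟩, hy, hz⟩, h1.trans h2.symm⟩, h1⟩
    · intro q hq; rfl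
    · intro p hp; rfl
  -- total mass
  have hsum : ∑ x ∈ I, r x = A.card * Y.card := by
    have := Finset.card_eq_sum_card_fiberwise
      (f := f) (s := T) (t := I) (fun p hp => Finset.mem_image_of_mem f hp)
    rw [← this, hT, Finset.card_product]
  -- popular set
  set B : Finset X := I.filter (fun x => α * A.card ≤ (r x : ℝ)) with hB
  set E : Finset (G × X) := T.filter (fun p => f p ∈ B) with hEdef
  have hEsub : E ⊆ A ×ˢ Y := by rw [hEdef, hT]; exact Finset.filter_subset _ _
  have hEcard : E.card = ∑ x ∈ B, r x := by
    rw [Finset.card_eq_sum_card_fiberwise (f := f) (s := E) (t := B)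
      (fun p hp => (Finset.mem_filter.1 hp).2)]
    refine Finset.sum_congr rfl fun x hx => ?_
    congr 1
    ext p
    simp only [hEdef, Finset.mem_filter, hr]
    constructor
    · rintro ⟨⟨h1, h2⟩, h3⟩; exact ⟨h1, h3⟩
    · rintro ⟨h1, h3⟩; exact ⟨⟨h1, h3 ▸ hx⟩, h3⟩
  -- real sums
  have htotR : ∑ x ∈ I, (r x : ℝ) = (A.card : ℝ) * Y.card := by
    rw [← Nat.cast_sum, hsum]; push_cast; ring
  have hSR : 2 * α * (A.card : ℝ) ^ 2 * Y.card ≤ ∑ x ∈ I, (r x : ℝ) * r x := by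
    calc 2 * α * (A.card : ℝ) ^ 2 * Y.card
        ≤ ((∑ x ∈ I, r x * r x : ℕ) : ℝ) := by rw [← hS]; exact hE
      _ = ∑ x ∈ I, (r x : ℝ) * r x := by push_cast; ring
  have hrnn : ∀ x, (0:ℝ) ≤ (r x : ℝ) := fun x => Nat.cast_nonneg _
  -- bound on sum over complement of B
  have hcompl : ∑ x ∈ I \ B, (r x : ℝ) * r x ≤ α * A.card * ((A.card : ℝ) * Y.card) := by
    calc ∑ x ∈ I \ B, (r x : ℝ) * r x
        ≤ ∑ x ∈ I \ B, α * A.card * r x := by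
          refine Finset.sum_le_sum fun x hx => ?_
          have hx' := Finset.mem_sdiff.1 hx
          have : ¬ (α * A.card ≤ (r x : ℝ)) := by
            intro h
            exact hx'.2 (Finset.mem_filter.2 ⟨hx'.1, h⟩)
          exact mul_le_mul_of_nonneg_right (le_of_not_ge this) (hrnn x)
      _ = α * A.card * ∑ x ∈ I \ B, (r x : ℝ) := by rw [Finset.mul_sum]
      _ ≤ α * A.card * ((A.card : ℝ) * Y.card) := by
          apply mul_le_mul_of_nonneg_left _ (mul_pos hα0 hN).le
          rw [← htotR]
          exact Finset.sum_le_sum_of_subset_of_nonneg (Finset.sdiff_subset)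
            (fun x _ _ => hrnn x)
  have hBsubI : B ⊆ I := Finset.filter_subset _ _
  have hsplit : ∑ x ∈ I \ B, (r x : ℝ) * r x + ∑ x ∈ B, (r x : ℝ) * r x
      = ∑ x ∈ I, (r x : ℝ) * r x := Finset.sum_sdiff hBsubI
  -- ∑_B r² ≥ α N² M
  have hBsq : α * (A.card : ℝ) ^ 2 * Y.card ≤ ∑ x ∈ B, (r x : ℝ) * r x := by
    nlinarith [hSR, hcompl, hsplit, hN, hM]
  -- ∑_B r² ≤ N ∑_B r
  have hBlin : ∑ x ∈ B, (r x : ℝ) * r x ≤ (A.card : ℝ) * ∑ x ∈ B, (r x : ℝ) := by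
    rw [Finset.mul_sum]
    exact Finset.sum_le_sum fun x _ => mul_le_mul_of_nonneg_right (hrA x) (hrnn x)
  -- |E| ≥ α N M
  have hEbig : α * A.card * Y.card ≤ (E.card : ℝ) := by
    have h2 : (A.card : ℝ) * (α * A.card * Y.card) ≤ (A.card : ℝ) * ∑ x ∈ B, (r x : ℝ) := by
      calc (A.card : ℝ) * (α * A.card * Y.card) = α * (A.card : ℝ) ^ 2 * Y.card := by ring
        _ ≤ ∑ x ∈ B, (r x : ℝ) * r x := hBsq
        _ ≤ _ := hBlin
    have h3 := le_of_mul_le_mul_left h2 hN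
    calc α * A.card * Y.card ≤ ∑ x ∈ B, (r x : ℝ) := h3
      _ = (E.card : ℝ) := by rw [hEcard]; push_cast; ring
  -- |B| ≤ α⁻² M
  have hIsq : ∑ x ∈ I, (r x : ℝ) * r x ≤ (A.card : ℝ) ^ 2 * Y.card := by
    calc ∑ x ∈ I, (r x : ℝ) * r x ≤ ∑ x ∈ I, (A.card : ℝ) * r x :=
          Finset.sum_le_sum fun x _ => mul_le_mul_of_nonneg_right (hrA x) (hrnn x)
      _ = (A.card : ℝ) * ∑ x ∈ I, (r x : ℝ) := by rw [Finset.mul_sum]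
      _ = (A.card : ℝ) ^ 2 * Y.card := by rw [htotR]; ring
  have hBcard : (B.card : ℝ) ≤ α⁻¹ ^ 2 * Y.card := by
    have hlow := Finset.card_nsmul_le_sum B (fun x => (r x : ℝ) * r x)
      (α * A.card * (α * A.card))
      (fun x hx => by
        have hxB := (Finset.mem_filter.1 hx).2
        have h0 : (0:ℝ) ≤ α * A.card := (mul_pos hα0 hN).le
        exact mul_le_mul hxB hxB h0 (hrnn x))
    rw [nsmul_eq_mul] at hlow
    have hchain : (B.card : ℝ) * (α * A.card * (α * A.card)) ≤ (A.card:ℝ)^2 * Y.card :=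
      hlow.trans ((Finset.sum_le_sum_of_subset_of_nonneg hBsubI
        (fun x _ _ => mul_nonneg (hrnn x) (hrnn x))).trans hIsq)
    have hkey : (B.card : ℝ) * α ^ 2 ≤ Y.card := by
      nlinarith [hchain, hN, mul_pos hN hN, (Nat.cast_nonneg B.card : (0:ℝ) ≤ B.card)]
    rw [inv_pow, inv_mul_eq_div, le_div_iff₀ (pow_pos hα0 2)]
    exact hkey
  refine ⟨E, hEsub, hEbig, ?_⟩
  have himg : E.image f ⊆ B := by
    intro x hx
    obtain ⟨p, hp, rfl⟩ := Finset.mem_image.1 hx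
    exact (Finset.mem_filter.1 hp).2
  calc ((E.image f).card : ℝ) ≤ (B.card : ℝ) := by
        exact_mod_cast Finset.card_le_card himg
    _ ≤ _ := hBcard
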